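/- arXiv:1308.3624 — 2 statements merged into one kernel-verified Lean document; each statement's English description precedes it below -/
import Mathlib

section
/- Let (Xᵢ)_{i≥1} be identically distributed random vectors in ℝ^d whose norm ‖X₁‖ (Euclidean norm) has a regularly varying tail of index −α with α ∈ (0,1), and let (aₙ) be positive reals with n·P(‖X₁‖ > aₙ) → 1 as n → ∞. For u > 0 and δ > 0 set I(u,n) = P( max_{1≤k≤n} ‖ ( Σ_{i=1}^k ( (Xᵢʲ/aₙ)·1{|Xᵢʲ| ≤ u·aₙ} − E[(X₁ʲ/aₙ)·1{|X₁ʲ| ≤ u·aₙ}] ) )_{j=1,…,d} ‖ > δ ). Then limsup_{n→∞} I(u,n) ≤ 2d·δ^{−1}·u^{1−α}·(1 + α/(1−α)). -/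
open MeasureTheory Filter Set

-- Potter iteration
lemma potter_iter {F : ℝ → ℝ} {lam β x0 : ℝ} (hlam : 1 < lam) (hx0 : 0 < x0)
    (h : ∀ x, x0 ≤ x → F x ≤ lam ^ β * F (lam * x)) :
    ∀ m : ℕ, ∀ x, x0 ≤ x → F x ≤ lam ^ ((m : ℝ) * β) * F (lam ^ m * x) := by
  intro m
  induction m with
  | zero => intro x hx; simp
  | succ m ih =>
    intro x hx
    have hlam0 : (0:ℝ) < lam := lt_trans one_pos hlam
    have h1 : F x ≤ lam ^ β * F (lam * x) := h x hx
    have h2 : F (lam * x) ≤ lam ^ ((m : ℝ) * β) * F (lam ^ m * (lam * x)) := by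
      apply ih
      calc x0 ≤ x := hx
        _ ≤ lam * x := le_mul_of_one_le_left (le_trans hx0.le hx) hlam.le
    have hb : (0:ℝ) ≤ lam ^ β := (Real.rpow_pos_of_pos hlam0 β).le
    calc F x ≤ lam ^ β * (lam ^ ((m:ℝ) * β) * F (lam ^ m * (lam * x))) :=
          le_trans h1 (by exact mul_le_mul_of_nonneg_left h2 hb)
      _ = lam ^ (((m:ℕ)+1 : ℝ) * β) * F (lam ^ (m+1) * x) := by
          rw [← mul_assoc, ← Real.rpow_add hlam0]
          ring_nf
      _ = lam ^ (((m+1 : ℕ) : ℝ) * β) * F (lam ^ (m+1) * x) := by push_cast; ring_nf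

lemma potter_bound {F : ℝ → ℝ} {lam β x0 : ℝ} (hF : Antitone F)
    (hFnn : ∀ x, 0 ≤ F x)
    (hlam : 1 < lam) (hβ : 0 ≤ β) (hx0 : 0 < x0)
    (h : ∀ x, x0 ≤ x → F x ≤ lam ^ β * F (lam * x)) :
    ∀ s t, x0 ≤ s → s ≤ t → F s ≤ lam ^ β * (t / s) ^ β * F t := by
  intro s t hs hst
  have hlam0 : (0:ℝ) < lam := lt_trans one_pos hlam
  have hs0 : 0 < s := lt_of_lt_of_le hx0 hs
  have ht0 : 0 < t := lt_of_lt_of_le hs0 hst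
  have hts1 : 1 ≤ t / s := (one_le_div hs0).2 hst
  have hts0 : 0 < t / s := lt_of_lt_of_le one_pos hts1
  set m : ℕ := ⌈Real.logb lam (t / s)⌉₊ with hm
  have hlogb_nn : 0 ≤ Real.logb lam (t / s) := Real.logb_nonneg hlam hts1
  have hmge : Real.logb lam (t / s) ≤ (m : ℝ) := Nat.le_ceil _
  have hmle : (m : ℝ) ≤ Real.logb lam (t / s) + 1 := by
    have := Nat.ceil_lt_add_one hlogb_nn
    exact this.le
  have hpow_ge : t / s ≤ lam ^ m := by
    have : lam ^ Real.logb lam (t / s) ≤ lam ^ (m : ℝ) :=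
      Real.rpow_le_rpow_of_exponent_le hlam.le hmge
    rwa [Real.rpow_logb hlam0 (ne_of_gt hlam) hts0, Real.rpow_natCast] at this
  have hpow_le : (lam : ℝ) ^ m ≤ lam * (t / s) := by
    have : lam ^ (m : ℝ) ≤ lam ^ (Real.logb lam (t / s) + 1) :=
      Real.rpow_le_rpow_of_exponent_le hlam.le hmle
    rwa [Real.rpow_add hlam0, Real.rpow_logb hlam0 (ne_of_gt hlam) hts0,
      Real.rpow_one, Real.rpow_natCast, mul_comm] at this
  have key := potter_iter hlam hx0 h m s hs
  have hFt : F (lam ^ m * s) ≤ F t := by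
    apply hF
    calc t = (t / s) * s := by field_simp
      _ ≤ lam ^ m * s := mul_le_mul_of_nonneg_right hpow_ge hs0.le
  have hmul : lam ^ ((m:ℝ) * β) ≤ lam ^ β * (t / s) ^ β := by
    have h1 : lam ^ ((m:ℝ) * β) = ((lam:ℝ) ^ m) ^ β := by
      rw [← Real.rpow_natCast lam m, ← Real.rpow_mul hlam0.le]
    rw [h1, ← Real.mul_rpow hlam0.le hts0.le]
    exact Real.rpow_le_rpow (pow_nonneg hlam0.le m) hpow_le hβ
  calc F s ≤ lam ^ ((m:ℝ) * β) * F (lam ^ m * s) := key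
    _ ≤ lam ^ ((m:ℝ) * β) * F t := mul_le_mul_of_nonneg_left hFt (Real.rpow_nonneg hlam0.le _)
    _ ≤ lam ^ β * (t / s) ^ β * F t := mul_le_mul_of_nonneg_right hmul (hFnn t)

lemma integral_antitone_bound {F : ℝ → ℝ} {x0 t C β : ℝ}
    (hF : Antitone F) (hF0 : ∀ x, 0 ≤ F x) (hF1 : ∀ x, F x ≤ 1)
    (hx0 : 0 < x0) (hx0t : x0 ≤ t) (hC : 0 ≤ C) (hβ0 : 0 ≤ β) (hβ1 : β < 1)
    (hp : ∀ s, x0 ≤ s → s ≤ t → F s ≤ C * s ^ (-β)) :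
    ∫ s in Ioo 0 t, F s ≤ x0 + C * t ^ (1 - β) / (1 - β) := by
  have ht0 : 0 < t := lt_of_lt_of_le hx0 hx0t
  have hFmeas : Measurable F := hF.measurable
  have hFint : ∀ (A : Set ℝ), volume A ≠ ⊤ → IntegrableOn F A := by
    intro A hA
    haveI := Fact.mk hA.lt_top
    exact Integrable.mono' (integrable_const 1) hFmeas.aestronglyMeasurable
      (.of_forall fun x => by rw [Real.norm_eq_abs, abs_of_nonneg (hF0 x)]; exact hF1 x)
  have hIoo : volume (Ioo (0:ℝ) t) ≠ ⊤ := by simp [Real.volume_Ioo]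
  have hIoo0 : volume (Ioo (0:ℝ) x0) ≠ ⊤ := by simp [Real.volume_Ioo]
  have hIco : volume (Ico x0 t) ≠ ⊤ := by simp [Real.volume_Ico]
  -- integrability of rpow on Ioc 0 t
  have hrpow_int : IntegrableOn (fun s : ℝ => s ^ (-β)) (Ioc 0 t) := by
    have := intervalIntegral.intervalIntegrable_rpow' (a := 0) (b := t) (r := -β)
      (by linarith)
    rwa [intervalIntegrable_iff_integrableOn_Ioc_of_le ht0.le] at this
  -- split
  have hsplit : Ioo (0:ℝ) t = Ioo 0 x0 ∪ Ico x0 t := by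
    ext s; simp only [mem_Ioo, mem_union, mem_Ico]
    constructor
    · rintro ⟨h1, h2⟩
      rcases lt_or_ge s x0 with h | h
      · exact Or.inl ⟨h1, h⟩
      · exact Or.inr ⟨h, h2⟩
    · rintro (⟨h1, h2⟩ | ⟨h1, h2⟩)
      · exact ⟨h1, lt_of_lt_of_le h2 hx0t⟩
      · exact ⟨lt_of_lt_of_le hx0 h1, h2⟩
  have hdisj : Disjoint (Ioo (0:ℝ) x0) (Ico x0 t) := by
    apply Set.disjoint_left.2
    rintro s ⟨_, h2⟩ ⟨h3, _⟩
    exact absurd h3 (not_le.2 h2)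
  rw [hsplit, setIntegral_union hdisj measurableSet_Ico (hFint _ hIoo0) (hFint _ hIco)]
  have h1 : ∫ s in Ioo (0:ℝ) x0, F s ≤ x0 := by
    calc ∫ s in Ioo (0:ℝ) x0, F s ≤ ∫ _ in Ioo (0:ℝ) x0, (1:ℝ) :=
        setIntegral_mono_on (hFint _ hIoo0) (integrableOn_const hIoo0)
          measurableSet_Ioo (fun x _ => hF1 x)
      _ = x0 := by simp [Real.volume_Ioo, ENNReal.toReal_ofReal hx0.le, hx0.le]
  have h2 : ∫ s in Ico x0 t, F s ≤ C * t ^ (1 - β) / (1 - β) := by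
    have hsub : Ico x0 t ⊆ Ioc 0 t := fun s hs =>
      ⟨lt_of_lt_of_le hx0 hs.1, hs.2.le⟩
    have hint2 : IntegrableOn (fun s : ℝ => C * s ^ (-β)) (Ico x0 t) :=
      ((hrpow_int.mono_set hsub).const_mul C)
    calc ∫ s in Ico x0 t, F s ≤ ∫ s in Ico x0 t, C * s ^ (-β) :=
        setIntegral_mono_on (hFint _ hIco) hint2 measurableSet_Ico
          (fun s hs => hp s hs.1 hs.2.le)
      _ ≤ ∫ s in Ioc (0:ℝ) t, C * s ^ (-β) := by
        apply setIntegral_mono_set (hrpow_int.const_mul C)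
        · filter_upwards [ae_restrict_mem measurableSet_Ioc] with s hs
          exact mul_nonneg hC (Real.rpow_nonneg hs.1.le _)
        · exact .of_forall hsub
      _ = C * ∫ s in Ioc (0:ℝ) t, s ^ (-β) := integral_const_mul _ _
      _ = C * (t ^ (1 - β) / (1 - β)) := by
        rw [← intervalIntegral.integral_of_le ht0.le,
          integral_rpow (Or.inl (by linarith))]
        rw [Real.zero_rpow (by linarith : -β + 1 ≠ 0)]
        ring_nf
      _ = C * t ^ (1 - β) / (1 - β) := by ring
  linarith

lemma integral_min_le {Ω : Type*} [MeasurableSpace Ω] (μ : Measure Ω) [IsProbabilityMeasure μ]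
    {Y : Ω → ℝ} (hY : Measurable Y) (hY0 : ∀ ω, 0 ≤ Y ω) {t : ℝ} (ht : 0 < t) :
    ∫ ω, min (Y ω) t ∂μ ≤ ∫ s in Ioo 0 t, (μ {ω | Y ω > s}).toReal := by
  have hfmeas : Measurable fun ω => min (Y ω) t := hY.min measurable_const
  have hfint : Integrable (fun ω => min (Y ω) t) μ :=
    Integrable.mono' (integrable_const t) hfmeas.aestronglyMeasurable
      (.of_forall fun ω => by
        rw [Real.norm_eq_abs, abs_of_nonneg (le_min (hY0 ω) ht.le)]
        exact min_le_right _ _)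
  rw [hfint.integral_eq_integral_meas_lt (.of_forall fun ω => le_min (hY0 ω) ht.le)]
  set g : ℝ → ℝ := fun s => (μ {a | s < min (Y a) t}).toReal with hg
  set F : ℝ → ℝ := fun s => (μ {ω | Y ω > s}).toReal with hF
  have hganti : Antitone g := by
    intro s1 s2 h
    exact ENNReal.toReal_mono (measure_ne_top _ _)
      (measure_mono fun a ha => lt_of_le_of_lt h ha)
  have hFanti : Antitone F := by
    intro s1 s2 h
    exact ENNReal.toReal_mono (measure_ne_top _ _)
      (measure_mono fun a ha => lt_of_le_of_lt h ha)
  have hg0 : ∀ s, 0 ≤ g s := fun s => ENNReal.toReal_nonneg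
  have hg1 : ∀ s, g s ≤ 1 := fun s => by
    rw [hg]
    exact ENNReal.toReal_le_of_le_ofReal one_pos.le (by simpa using prob_le_one)
  have hint : ∀ {h : ℝ → ℝ}, Antitone h → (∀ s, 0 ≤ h s) → (∀ s, h s ≤ 1) →
      ∀ (A : Set ℝ), volume A ≠ ⊤ → IntegrableOn h A := by
    intro h hanti h0 h1 A hA
    haveI := Fact.mk hA.lt_top
    exact Integrable.mono' (integrable_const 1) hanti.measurable.aestronglyMeasurable
      (.of_forall fun x => by rw [Real.norm_eq_abs, abs_of_nonneg (h0 x)]; exact h1 x)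
  have hgzero : ∀ s ∈ Ioi t, g s = 0 := by
    intro s hs
    rw [hg]
    have : {a | s < min (Y a) t} = ∅ := by
      ext a; simp only [mem_setOf_eq, mem_empty_iff_false, iff_false, not_lt]
      exact le_trans (min_le_right _ _) (le_of_lt hs)
    show (μ {a | s < Y a ⊓ t}).toReal = 0
    rw [this]
    simp
  have hsplit : Ioi (0:ℝ) = Ioc 0 t ∪ Ioi t := (Ioc_union_Ioi_eq_Ioi ht.le).symm
  have hdisj : Disjoint (Ioc (0:ℝ) t) (Ioi t) := by
    apply Set.disjoint_left.2
    rintro s ⟨_, h2⟩ h3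
    exact absurd h2 (not_le.2 h3)
  have hIoc : volume (Ioc (0:ℝ) t) ≠ ⊤ := by simp [Real.volume_Ioc]
  have hgIoi : IntegrableOn g (Ioi t) := by
    rw [integrableOn_congr_fun hgzero measurableSet_Ioi]
    exact integrableOn_zero
  change (∫ s in Ioi 0, g s) ≤ ∫ s in Ioo 0 t, F s
  rw [hsplit, setIntegral_union hdisj measurableSet_Ioi
    (hint hganti hg0 hg1 _ hIoc) hgIoi]
  have h2 : ∫ s in Ioi t, g s = 0 := by
    rw [setIntegral_congr_fun measurableSet_Ioi hgzero]
    simp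
  have h1 : ∫ s in Ioc (0:ℝ) t, g s ≤ ∫ s in Ioc (0:ℝ) t, F s := by
    apply setIntegral_mono_on (hint hganti hg0 hg1 _ hIoc)
      (hint hFanti (fun s => ENNReal.toReal_nonneg)
        (fun s => ENNReal.toReal_le_of_le_ofReal one_pos.le (by simpa using prob_le_one)) _ hIoc)
      measurableSet_Ioc
    intro s _
    exact ENNReal.toReal_mono (measure_ne_top _ _)
      (measure_mono fun a ha => show s < Y a from lt_of_lt_of_le ha (min_le_left _ _))
  rw [h2, add_zero, ← integral_Ioc_eq_integral_Ioo]
  exact h1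

lemma euclid_coord_meas {d : ℕ} (j : Fin d) :
    Measurable (fun v : EuclideanSpace ℝ (Fin d) => v j) :=
  (measurable_pi_apply j).comp (MeasurableEquiv.toLp 2 (Fin d → ℝ)).symm.measurable

lemma euclid_abs_coord_le {d : ℕ} (v : EuclideanSpace ℝ (Fin d)) (j : Fin d) :
    |v j| ≤ ‖v‖ := by
  rw [EuclideanSpace.norm_eq]
  rw [← Real.sqrt_sq_eq_abs]
  apply Real.sqrt_le_sqrt
  calc v j ^ 2 = ‖v j‖ ^ 2 := by rw [Real.norm_eq_abs, sq_abs]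
    _ ≤ ∑ i, ‖v i‖ ^ 2 := Finset.single_le_sum (f := fun i => ‖v i‖ ^ 2) (fun i _ => sq_nonneg _) (Finset.mem_univ j)

lemma euclid_norm_le_sum {d : ℕ} (f : Fin d → ℝ) :
    ‖(WithLp.equiv 2 (Fin d → ℝ)).symm f‖ ≤ ∑ j, |f j| := by
  rw [EuclideanSpace.norm_eq]
  have h1 : ∀ j : Fin d, ‖((WithLp.equiv 2 (Fin d → ℝ)).symm f) j‖ = |f j| := fun j => rfl
  simp_rw [h1]
  have h2 : ∑ j, |f j| ^ 2 ≤ (∑ j, |f j|) ^ 2 := by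
    rw [sq, Finset.sum_mul]
    apply Finset.sum_le_sum
    intro j _
    rw [sq]
    exact mul_le_mul_of_nonneg_left
      (Finset.single_le_sum (f := fun i => |f i|) (fun i _ => abs_nonneg _) (Finset.mem_univ j))
      (abs_nonneg (f j))
  calc Real.sqrt (∑ j, |f j| ^ 2) ≤ Real.sqrt ((∑ j, |f j|) ^ 2) := Real.sqrt_le_sqrt h2
    _ = ∑ j, |f j| := Real.sqrt_sq (Finset.sum_nonneg fun j _ => abs_nonneg _)

lemma per_n {Ω : Type*} [MeasurableSpace Ω] (ℙ : Measure Ω) [IsProbabilityMeasure ℙ]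
    {d : ℕ} (X : ℕ → Ω → EuclideanSpace ℝ (Fin d))
    (hmeas : ∀ i, Measurable (X i))
    (hident : ∀ i, 1 ≤ i → Measure.map (X i) ℙ = Measure.map (X 1) ℙ)
    (u δ c : ℝ) (hu : 0 < u) (hδ : 0 < δ) (hc : 0 < c) (n : ℕ) :
    (ℙ {ω | ∃ k, 1 ≤ k ∧ k ≤ n ∧
      δ < ‖(WithLp.equiv 2 (Fin d → ℝ)).symm (fun j =>
        ∑ i ∈ Finset.Icc 1 k,
          ((if |X i ω j| ≤ u * c then X i ω j / c else 0)
            - ∫ ω', (if |X 1 ω' j| ≤ u * c then X 1 ω' j / c else 0) ∂ℙ))‖}).toReal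
    ≤ δ⁻¹ * (2 * n * d * (c⁻¹ * ∫ s in Ioo 0 (u * c), (ℙ {ω | ‖X 1 ω‖ > s}).toReal)) := by
  set T : ℕ → Fin d → Ω → ℝ :=
    fun i j ω => if |X i ω j| ≤ u * c then X i ω j / c else 0 with hT
  set m : Fin d → ℝ := fun j => ∫ ω', T 1 j ω' ∂ℙ with hm
  set Z : Ω → ℝ := fun ω => ∑ j : Fin d, ∑ i ∈ Finset.Icc 1 n, |T i j ω - m j| with hZ
  -- measurability of coordinates
  have hcoord : ∀ i j, Measurable fun ω => X i ω j :=
    fun i j => (euclid_coord_meas j).comp (hmeas i)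
  have hTmeas : ∀ i j, Measurable (T i j) := by
    intro i j
    exact Measurable.ite (measurableSet_le (hcoord i j).abs measurable_const)
      ((hcoord i j).div_const _) measurable_const
  have hTbd : ∀ i j ω, |T i j ω| ≤ u := by
    intro i j ω
    rw [hT]
    dsimp only
    split_ifs with h
    · rw [abs_div, abs_of_pos hc, div_le_iff₀ hc]
      calc |X i ω j| ≤ u * c := h
        _ = u * c := rfl
    · simpa using hu.le
  have hTint : ∀ i j, Integrable (T i j) ℙ := fun i j =>
    Integrable.mono' (integrable_const u) (hTmeas i j).aestronglyMeasurable
      (.of_forall fun ω => by rw [Real.norm_eq_abs]; exact hTbd i j ω)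
  have hTmint : ∀ i j, Integrable (fun ω => |T i j ω - m j|) ℙ :=
    fun i j => ((hTint i j).sub (integrable_const _)).abs
  have hZint : Integrable Z ℙ := by
    apply integrable_finset_sum
    intro j _
    exact integrable_finset_sum _ fun i _ => hTmint i j
  have hZnn : ∀ ω, 0 ≤ Z ω := fun ω =>
    Finset.sum_nonneg fun j _ => Finset.sum_nonneg fun i _ => abs_nonneg _
  -- step 1 : event inclusion
  have hsub : {ω | ∃ k, 1 ≤ k ∧ k ≤ n ∧
      δ < ‖(WithLp.equiv 2 (Fin d → ℝ)).symm (fun j =>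
        ∑ i ∈ Finset.Icc 1 k, (T i j ω - m j))‖} ⊆ {ω | δ ≤ Z ω} := by
    rintro ω ⟨k, hk1, hkn, hδk⟩
    have h1 : ‖(WithLp.equiv 2 (Fin d → ℝ)).symm (fun j =>
        ∑ i ∈ Finset.Icc 1 k, (T i j ω - m j))‖ ≤
        ∑ j : Fin d, |∑ i ∈ Finset.Icc 1 k, (T i j ω - m j)| :=
      euclid_norm_le_sum _
    have h2 : ∀ j : Fin d, |∑ i ∈ Finset.Icc 1 k, (T i j ω - m j)| ≤
        ∑ i ∈ Finset.Icc 1 n, |T i j ω - m j| := by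
      intro j
      calc |∑ i ∈ Finset.Icc 1 k, (T i j ω - m j)| ≤
          ∑ i ∈ Finset.Icc 1 k, |T i j ω - m j| := Finset.abs_sum_le_sum_abs _ _
        _ ≤ ∑ i ∈ Finset.Icc 1 n, |T i j ω - m j| :=
          Finset.sum_le_sum_of_subset_of_nonneg
            (Finset.Icc_subset_Icc_right hkn) (fun i _ _ => abs_nonneg _)
    exact le_trans hδk.le (le_trans h1 (Finset.sum_le_sum fun j _ => h2 j))
  -- step 2 : Markov
  have hmarkov : (ℙ {ω | δ ≤ Z ω}).toReal ≤ δ⁻¹ * ∫ ω, Z ω ∂ℙ := by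
    have h0 := mul_meas_ge_le_integral_of_nonneg (μ := ℙ)
      (.of_forall hZnn) hZint δ
    calc (ℙ {ω | δ ≤ Z ω}).toReal = δ⁻¹ * (δ * (ℙ {ω | δ ≤ Z ω}).toReal) := by
          field_simp
      _ ≤ δ⁻¹ * ∫ ω, Z ω ∂ℙ := mul_le_mul_of_nonneg_left h0 (inv_nonneg.2 hδ.le)
  -- step 3 : bound the integral of Z
  have hident' : ∀ i j, 1 ≤ i →
      ∫ ω, |T i j ω - m j| ∂ℙ = ∫ ω, |T 1 j ω - m j| ∂ℙ := by
    intro i j hi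
    set φ : EuclideanSpace ℝ (Fin d) → ℝ :=
      fun v => |(if |v j| ≤ u * c then v j / c else 0) - m j| with hφ
    have hφmeas : Measurable φ := by
      apply Measurable.abs
      apply Measurable.sub _ measurable_const
      exact Measurable.ite (measurableSet_le (euclid_coord_meas j).abs measurable_const)
        ((euclid_coord_meas j).div_const _) measurable_const
    have e1 : ∫ ω, |T i j ω - m j| ∂ℙ = ∫ v, φ v ∂(Measure.map (X i) ℙ) := by
      rw [integral_map (hmeas i).aemeasurable hφmeas.aestronglyMeasurable]
    have e2 : ∫ ω, |T 1 j ω - m j| ∂ℙ = ∫ v, φ v ∂(Measure.map (X 1) ℙ) := by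
      rw [integral_map (hmeas 1).aemeasurable hφmeas.aestronglyMeasurable]
    rw [e1, e2, hident i hi]
  have hmabs : ∀ j, |m j| ≤ ∫ ω, |T 1 j ω| ∂ℙ := by
    intro j
    rw [hm]
    calc |∫ ω', T 1 j ω' ∂ℙ| = ‖∫ ω', T 1 j ω' ∂ℙ‖ := (Real.norm_eq_abs _).symm
      _ ≤ ∫ ω', ‖T 1 j ω'‖ ∂ℙ := norm_integral_le_integral_norm _
      _ = ∫ ω', |T 1 j ω'| ∂ℙ := by simp [Real.norm_eq_abs]
  have hT1 : ∀ j, ∫ ω, |T 1 j ω - m j| ∂ℙ ≤ 2 * ∫ ω, |T 1 j ω| ∂ℙ := by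
    intro j
    calc ∫ ω, |T 1 j ω - m j| ∂ℙ ≤ ∫ ω, (|T 1 j ω| + |m j|) ∂ℙ := by
          apply integral_mono (hTmint 1 j) (((hTint 1 j).abs).add (integrable_const _))
          intro ω
          exact abs_sub _ _
      _ = (∫ ω, |T 1 j ω| ∂ℙ) + |m j| := by
        rw [integral_add ((hTint 1 j).abs) (integrable_const _), integral_const]
        simp
      _ ≤ 2 * ∫ ω, |T 1 j ω| ∂ℙ := by
        have := hmabs j
        linarith
  -- step 4 : coordinate truncated expectation vs layer cake
  have hT1layer : ∀ j, ∫ ω, |T 1 j ω| ∂ℙ ≤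
      c⁻¹ * ∫ s in Ioo 0 (u * c), (ℙ {ω | ‖X 1 ω‖ > s}).toReal := by
    intro j
    have hminint : Integrable (fun ω => min ‖X 1 ω‖ (u * c)) ℙ :=
      Integrable.mono' (integrable_const (u * c))
        ((hmeas 1).norm.min measurable_const).aestronglyMeasurable
        (.of_forall fun ω => by
          rw [Real.norm_eq_abs, abs_of_nonneg (le_min (norm_nonneg _) (by positivity))]
          exact min_le_right _ _)
    have hpt : ∀ ω, |T 1 j ω| ≤ c⁻¹ * min ‖X 1 ω‖ (u * c) := by
      intro ω
      rw [hT]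
      dsimp only
      split_ifs with h
      · rw [abs_div, abs_of_pos hc, div_eq_inv_mul]
        apply mul_le_mul_of_nonneg_left _ (inv_nonneg.2 hc.le)
        exact le_min (le_trans (euclid_abs_coord_le _ j) (le_refl _)) h
      · rw [abs_zero]
        exact mul_nonneg (inv_nonneg.2 hc.le) (le_min (norm_nonneg _) (by positivity))
    calc ∫ ω, |T 1 j ω| ∂ℙ ≤ ∫ ω, c⁻¹ * min ‖X 1 ω‖ (u * c) ∂ℙ :=
        integral_mono ((hTint 1 j).abs) (hminint.const_mul _) hpt
      _ = c⁻¹ * ∫ ω, min ‖X 1 ω‖ (u * c) ∂ℙ := integral_const_mul _ _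
      _ ≤ c⁻¹ * ∫ s in Ioo 0 (u * c), (ℙ {ω | ‖X 1 ω‖ > s}).toReal := by
        apply mul_le_mul_of_nonneg_left _ (inv_nonneg.2 hc.le)
        exact integral_min_le ℙ (hmeas 1).norm (fun ω => norm_nonneg _) (by positivity)
  -- combine
  have hZint_le : ∫ ω, Z ω ∂ℙ ≤
      2 * n * d * (c⁻¹ * ∫ s in Ioo 0 (u * c), (ℙ {ω | ‖X 1 ω‖ > s}).toReal) := by
    set K := c⁻¹ * ∫ s in Ioo 0 (u * c), (ℙ {ω | ‖X 1 ω‖ > s}).toReal with hK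
    have : ∫ ω, Z ω ∂ℙ = ∑ j : Fin d, ∑ i ∈ Finset.Icc 1 n, ∫ ω, |T i j ω - m j| ∂ℙ := by
      rw [hZ, integral_finset_sum _ (fun j _ => integrable_finset_sum _ fun i _ => hTmint i j)]
      congr 1
      ext j
      rw [integral_finset_sum _ (fun i _ => hTmint i j)]
    rw [this]
    calc ∑ j : Fin d, ∑ i ∈ Finset.Icc 1 n, ∫ ω, |T i j ω - m j| ∂ℙ
        ≤ ∑ j : Fin d, ∑ i ∈ Finset.Icc 1 n, (2 * K) := by
          apply Finset.sum_le_sum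
          intro j _
          apply Finset.sum_le_sum
          intro i hi
          rw [hident' i j (Finset.mem_Icc.1 hi).1]
          calc ∫ ω, |T 1 j ω - m j| ∂ℙ ≤ 2 * ∫ ω, |T 1 j ω| ∂ℙ := hT1 j
            _ ≤ 2 * K := by
              have := hT1layer j
              linarith
      _ = d * (n * (2 * K)) := by
          simp [Finset.sum_const, Nat.card_Icc]
          try ring
      _ = 2 * n * d * K := by ring
  calc (ℙ {ω | ∃ k, 1 ≤ k ∧ k ≤ n ∧
      δ < ‖(WithLp.equiv 2 (Fin d → ℝ)).symm (fun j =>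
        ∑ i ∈ Finset.Icc 1 k, (T i j ω - m j))‖}).toReal
      ≤ (ℙ {ω | δ ≤ Z ω}).toReal :=
        ENNReal.toReal_mono (measure_ne_top _ _) (measure_mono hsub)
    _ ≤ δ⁻¹ * ∫ ω, Z ω ∂ℙ := hmarkov
    _ ≤ δ⁻¹ * (2 * n * d * (c⁻¹ * ∫ s in Ioo 0 (u * c), (ℙ {ω | ‖X 1 ω‖ > s}).toReal)) := by
        apply mul_le_mul_of_nonneg_left hZint_le (inv_nonneg.2 hδ.le)

set_option maxHeartbeats 1000000 in
/-- Quantitative bound on the maximal deviation of centered small-jump partial sums: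
for identically distributed random vectors whose norm has a regularly varying tail of
index `-α`, `α ∈ (0,1)`, the probability `I(u,n)` satisfies
`limsup_n I(u,n) ≤ 2d δ⁻¹ u^{1-α} (1 + α/(1-α))`. -/
theorem limsup_small_jumps_bound
    {Ω : Type*} [MeasurableSpace Ω] (ℙ : Measure Ω) [IsProbabilityMeasure ℙ]
    {d : ℕ} (X : ℕ → Ω → EuclideanSpace ℝ (Fin d))
    (hmeas : ∀ i, Measurable (X i))
    (hident : ∀ i, 1 ≤ i → Measure.map (X i) ℙ = Measure.map (X 1) ℙ)
    (α : ℝ) (hα : 0 < α) (hα1 : α < 1)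
    (hpos : ∀ x : ℝ, 0 < x → 0 < ℙ {ω | ‖X 1 ω‖ > x})
    (hrv : ∀ l : ℝ, 0 < l →
      Tendsto (fun x : ℝ => (ℙ {ω | ‖X 1 ω‖ > l * x}).toReal / (ℙ {ω | ‖X 1 ω‖ > x}).toReal)
        atTop (nhds (l ^ (-α))))
    (a : ℕ → ℝ) (hapos : ∀ n, 0 < a n)
    (han : Tendsto (fun n : ℕ => (n : ℝ) * (ℙ {ω | ‖X 1 ω‖ > a n}).toReal) atTop (nhds 1))
    (u δ : ℝ) (hu : 0 < u) (hδ : 0 < δ) :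
    Filter.limsup
      (fun n : ℕ =>
        (ℙ {ω | ∃ k, 1 ≤ k ∧ k ≤ n ∧
          δ < ‖(WithLp.equiv 2 (Fin d → ℝ)).symm (fun j =>
            ∑ i ∈ Finset.Icc 1 k,
              ((if |X i ω j| ≤ u * a n then X i ω j / a n else 0)
                - ∫ ω', (if |X 1 ω' j| ≤ u * a n then X 1 ω' j / a n else 0) ∂ℙ))‖}).toReal)
      atTop
      ≤ 2 * d * δ⁻¹ * u ^ (1 - α) * (1 + α / (1 - α)) := by

  classical
  have h2d : (0:ℝ) ≤ 2 * d * δ⁻¹ := by positivity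
  set F : ℝ → ℝ := fun s => (ℙ {ω | ‖X 1 ω‖ > s}).toReal with hFdef
  have hFanti : Antitone F := fun s1 s2 h =>
    ENNReal.toReal_mono (measure_ne_top _ _)
      (measure_mono fun ω hω => lt_of_le_of_lt h hω)
  have hF0 : ∀ x, 0 ≤ F x := fun x => ENNReal.toReal_nonneg
  have hF1 : ∀ x, F x ≤ 1 := fun x =>
    ENNReal.toReal_le_of_le_ofReal one_pos.le (by simpa using prob_le_one)
  have hFpos : ∀ x, 0 < x → 0 < F x := fun x hx =>
    ENNReal.toReal_pos (hpos x hx).ne' (measure_ne_top _ _)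
  have hFne : ∀ x, 0 < x → F x ≠ 0 := fun x hx => (hFpos x hx).ne'
  set P : ℕ → ℝ := fun n =>
    (ℙ {ω | ∃ k, 1 ≤ k ∧ k ≤ n ∧
      δ < ‖(WithLp.equiv 2 (Fin d → ℝ)).symm (fun j =>
        ∑ i ∈ Finset.Icc 1 k,
          ((if |X i ω j| ≤ u * a n then X i ω j / a n else 0)
            - ∫ ω', (if |X 1 ω' j| ≤ u * a n then X 1 ω' j / a n else 0) ∂ℙ))‖}).toReal
    with hPdef
  -- a_n → ∞
  have hFa0 : Tendsto (fun n => F (a n)) atTop (nhds 0) := by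
    have h1 : Tendsto (fun n : ℕ => ((n : ℝ))⁻¹) atTop (nhds 0) :=
      tendsto_inv_atTop_zero.comp tendsto_natCast_atTop_atTop
    have h2 := h1.mul han
    rw [zero_mul] at h2
    apply h2.congr'
    filter_upwards [eventually_ge_atTop 1] with n hn
    have : (n:ℝ) ≠ 0 := by positivity
    field_simp
    rfl
  have ha_top : Tendsto a atTop atTop := by
    rw [tendsto_atTop]
    intro b
    have hM : (0:ℝ) < max b 1 := lt_of_lt_of_le one_pos (le_max_right _ _)
    have h3 : ∀ᶠ n in atTop, F (a n) < F (max b 1) :=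
      hFa0.eventually_lt_const (hFpos _ hM)
    filter_upwards [h3] with n hn
    by_contra hcon
    push_neg at hcon
    exact absurd hn (not_lt.2 (hFanti (le_trans hcon.le (le_max_left _ _))))
  have hnFu : Tendsto (fun n : ℕ => (n:ℝ) * F (u * a n)) atTop (nhds (u ^ (-α))) := by
    have hr : Tendsto (fun n => F (u * a n) / F (a n)) atTop (nhds (u ^ (-α))) :=
      (hrv u hu).comp ha_top
    have h4 := han.mul hr
    rw [one_mul] at h4
    apply h4.congr
    intro n
    field_simp [hFne (a n) (hapos n)]
    ring
  -- key bound for each small ε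
  have key : ∀ ε : ℝ, 0 < ε → ε < 1 - α →
      Filter.limsup P atTop ≤
        2 * d * δ⁻¹ * ((1+ε) ^ (α+ε) / (1 - (α+ε)) * u * u ^ (-α)) := by
    intro ε hε hε1
    set lam : ℝ := 1 + ε with hlamdef
    set β : ℝ := α + ε with hβdef
    have hlam : 1 < lam := by simp [hlamdef]; linarith
    have hlam0 : (0:ℝ) < lam := lt_trans one_pos hlam
    have hβ0 : 0 < β := by simp [hβdef]; linarith
    have hβ1 : β < 1 := by simp [hβdef]; linarith
    have hβα : α < β := by simp [hβdef]; linarith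
    -- eventual ratio bound
    have hltb : lam ^ (-β) < lam ^ (-α) :=
      Real.rpow_lt_rpow_of_exponent_lt hlam (by linarith)
    have hev0 : ∀ᶠ x in atTop, lam ^ (-β) < F (lam * x) / F x :=
      (hrv lam hlam0).eventually (eventually_gt_nhds hltb)
    obtain ⟨x1, hx1⟩ := eventually_atTop.1 hev0
    set x0 : ℝ := max x1 1 with hx0def
    have hx0pos : (0:ℝ) < x0 := lt_of_lt_of_le one_pos (le_max_right _ _)
    have h' : ∀ x, x0 ≤ x → F x ≤ lam ^ β * F (lam * x) := by
      intro x hx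
      have hxpos : 0 < x := lt_of_lt_of_le hx0pos hx
      have h5 := hx1 x (le_trans (le_max_left _ _) hx)
      rw [lt_div_iff₀ (hFpos x hxpos)] at h5
      calc F x = lam ^ β * (lam ^ (-β) * F x) := by
            rw [← mul_assoc, ← Real.rpow_add hlam0]
            simp
        _ ≤ lam ^ β * F (lam * x) :=
            mul_le_mul_of_nonneg_left h5.le (Real.rpow_nonneg hlam0.le _)
    have hPotter := potter_bound hFanti hF0 hlam hβ0.le hx0pos h'
    -- n x0 / a n → 0
    have hterm1 : Tendsto (fun n : ℕ => (n:ℝ) * x0 / a n) atTop (nhds 0) := by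
      have hc0 : 0 < F x0 * x0 ^ β / lam ^ β := by
        have := hFpos x0 hx0pos
        positivity
      have hlow : ∀ᶠ n in atTop,
          F x0 * x0 ^ β / lam ^ β * (a n) ^ (1-β) ≤ F (a n) * a n := by
        filter_upwards [ha_top.eventually_ge_atTop x0] with n hn
        have hapn : 0 < a n := hapos n
        have h4 := hPotter x0 (a n) le_rfl hn
        rw [Real.div_rpow hapn.le hx0pos.le] at h4
        have h6 : F x0 * x0 ^ β / lam ^ β ≤ (a n) ^ β * F (a n) := by
          rw [div_le_iff₀ (by positivity)]
          calc F x0 * x0 ^ β ≤ lam ^ β * ((a n) ^ β / x0 ^ β) * F (a n) * x0 ^ β := by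
                have := mul_le_mul_of_nonneg_right h4 (Real.rpow_nonneg hx0pos.le β)
                linarith
            _ = (a n) ^ β * F (a n) * lam ^ β := by
                field_simp
        calc F x0 * x0 ^ β / lam ^ β * (a n) ^ (1-β)
            ≤ (a n) ^ β * F (a n) * (a n) ^ (1-β) :=
              mul_le_mul_of_nonneg_right h6 (Real.rpow_nonneg hapn.le _)
          _ = F (a n) * a n := by
              rw [mul_comm ((a n) ^ β) (F (a n)), mul_assoc, ← Real.rpow_add hapn]
              norm_num
      have htend : Tendsto (fun n => F x0 * x0 ^ β / lam ^ β * (a n) ^ (1-β)) atTop atTop :=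
        Tendsto.const_mul_atTop hc0 ((tendsto_rpow_atTop (by linarith)).comp ha_top)
      have hfa_top : Tendsto (fun n => F (a n) * a n) atTop atTop :=
        tendsto_atTop_mono' atTop hlow htend
      have hinv : Tendsto (fun n => (F (a n) * a n)⁻¹) atTop (nhds 0) :=
        hfa_top.inv_tendsto_atTop
      have h7 := (han.mul hinv).const_mul x0
      rw [one_mul, mul_zero] at h7
      apply h7.congr
      intro n
      field_simp [hFne (a n) (hapos n), (hapos n).ne']
      ring
    -- eventual bound on P
    set B : ℕ → ℝ := fun n =>
      2 * d * δ⁻¹ * ((n:ℝ) * x0 / a n + lam ^ β / (1-β) * u * ((n:ℝ) * F (u * a n)))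
      with hBdef
    have hevP : ∀ᶠ n in atTop, P n ≤ B n := by
      have hu_top : Tendsto (fun n => u * a n) atTop atTop :=
        ha_top.const_mul_atTop hu
      filter_upwards [hu_top.eventually_ge_atTop x0] with n hn
      have hapn : 0 < a n := hapos n
      have htpos : 0 < u * a n := by positivity
      have h5 := per_n ℙ X hmeas hident u δ (a n) hu hδ hapn n
      have h6 : ∫ s in Ioo 0 (u * a n), F s ≤
          x0 + lam ^ β * (u * a n) ^ β * F (u * a n) * (u * a n) ^ (1-β) / (1-β) := by
        apply integral_antitone_bound hFanti hF0 hF1 hx0pos hn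
          (by positivity) hβ0.le hβ1
        intro s hs hst
        have hspos : 0 < s := lt_of_lt_of_le hx0pos hs
        have h8 := hPotter s (u * a n) hs hst
        rw [Real.div_rpow htpos.le hspos.le] at h8
        calc F s ≤ lam ^ β * ((u * a n) ^ β / s ^ β) * F (u * a n) := h8
          _ = lam ^ β * (u * a n) ^ β * F (u * a n) * s ^ (-β) := by
              rw [Real.rpow_neg hspos.le]
              field_simp
      have h9 : (u * a n) ^ β * (u * a n) ^ (1-β) = u * a n := by
        rw [← Real.rpow_add htpos]
        norm_num
      have h10' : lam ^ β * (u * a n) ^ β * F (u * a n) * (u * a n) ^ (1-β)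
          = lam ^ β * F (u * a n) * (u * a n) := by
        calc lam ^ β * (u * a n) ^ β * F (u * a n) * (u * a n) ^ (1-β)
            = lam ^ β * F (u * a n) * ((u * a n) ^ β * (u * a n) ^ (1-β)) := by ring
          _ = lam ^ β * F (u * a n) * (u * a n) := by rw [h9]
      have h10 : x0 + lam ^ β * (u * a n) ^ β * F (u * a n) * (u * a n) ^ (1-β) / (1-β)
          = x0 + lam ^ β * F (u * a n) * (u * a n) / (1-β) := by
        rw [h10']
      rw [h10] at h6
      calc P n ≤ δ⁻¹ * (2 * n * d * ((a n)⁻¹ * ∫ s in Ioo 0 (u * a n), F s)) := h5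
        _ ≤ δ⁻¹ * (2 * n * d * ((a n)⁻¹ *
            (x0 + lam ^ β * F (u * a n) * (u * a n) / (1-β)))) := by
            apply mul_le_mul_of_nonneg_left _ (by positivity)
            apply mul_le_mul_of_nonneg_left _ (by positivity)
            exact mul_le_mul_of_nonneg_left h6 (by positivity)
        _ = B n := by
            rw [hBdef]
            have h1β : (1:ℝ) - β ≠ 0 := by linarith
            field_simp
    -- B converges
    have hBtend : Tendsto B atTop
        (nhds (2 * d * δ⁻¹ * (0 + lam ^ β / (1-β) * u * u ^ (-α)))) := by
      apply Tendsto.const_mul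
      exact hterm1.add ((hnFu.const_mul _))
    have hlimsup : Filter.limsup P atTop ≤
        2 * d * δ⁻¹ * (0 + lam ^ β / (1-β) * u * u ^ (-α)) := by
      have hPnn : ∀ n, (0:ℝ) ≤ P n := fun n => ENNReal.toReal_nonneg
      have hbdd : IsBoundedUnder (· ≥ ·) atTop P :=
        isBoundedUnder_of ⟨0, fun n => hPnn n⟩
      have hcob : IsCoboundedUnder (· ≤ ·) atTop P := hbdd.isCoboundedUnder_le
      calc Filter.limsup P atTop ≤ Filter.limsup B atTop :=
          Filter.limsup_le_limsup hevP hcob hBtend.isBoundedUnder_le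
        _ = _ := hBtend.limsup_eq
    rw [zero_add] at hlimsup
    exact hlimsup
  -- pass to the limit ε → 0⁺
  set cfun : ℝ → ℝ := fun ε =>
    2 * d * δ⁻¹ * ((1+ε) ^ (α+ε) / (1 - (α+ε)) * u * u ^ (-α)) with hcfun
  have hcont : ContinuousAt cfun 0 := by
    have hbase : ContinuousAt (fun ε : ℝ => ((1+ε : ℝ), (α+ε : ℝ))) 0 :=
      Continuous.continuousAt (by continuity)
    have h2 : ContinuousAt (fun p : ℝ × ℝ => p.1 ^ p.2)
        ((fun ε : ℝ => ((1+ε : ℝ), (α+ε : ℝ))) 0) := by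
      have : ((fun ε : ℝ => ((1+ε : ℝ), (α+ε : ℝ))) 0) = ((1:ℝ), α) := by norm_num
      rw [this]
      exact Real.continuousAt_rpow _ (Or.inl one_ne_zero)
    have h1 : ContinuousAt (fun ε : ℝ => (1+ε) ^ (α+ε)) 0 :=
      ContinuousAt.comp (g := fun p : ℝ × ℝ => p.1 ^ p.2)
        (f := fun ε : ℝ => ((1+ε : ℝ), (α+ε : ℝ))) h2 hbase
    have hden : ContinuousAt (fun ε : ℝ => 1 - (α+ε)) 0 := by fun_prop
    have hdne : (fun ε : ℝ => 1 - (α+ε)) 0 ≠ 0 := by norm_num; linarith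
    have h3 : ContinuousAt (fun ε : ℝ => (1+ε) ^ (α+ε) / (1 - (α+ε))) 0 :=
      h1.div hden hdne
    exact ((h3.mul continuousAt_const).mul continuousAt_const).const_mul _
  have hc : Tendsto cfun (nhdsWithin 0 (Ioi 0)) (nhds (cfun 0)) :=
    hcont.tendsto.mono_left nhdsWithin_le_nhds
  have hev2 : ∀ᶠ ε in nhdsWithin 0 (Ioi 0), Filter.limsup P atTop ≤ cfun ε := by
    filter_upwards [Ioo_mem_nhdsGT
      (show (0:ℝ) < 1 - α by linarith)] with ε hε
    exact key ε hε.1 hε.2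
  have hfinal : Filter.limsup P atTop ≤ cfun 0 := ge_of_tendsto hc hev2
  have hc0 : cfun 0 = 2 * d * δ⁻¹ * u ^ (1-α) * (1 + α / (1-α)) := by
    have hrw1 : u ^ ((1:ℝ)-α) = u * u ^ (-α) := by
      rw [show (1:ℝ) - α = 1 + (-α) by ring, Real.rpow_add hu, Real.rpow_one]
    have h1α : (1:ℝ) - α ≠ 0 := by linarith
    have hrw2 : (1:ℝ) + α / (1-α) = 1 / (1-α) := by
      field_simp
      ring
    have hb : cfun 0 = 2 * d * δ⁻¹ * ((1:ℝ) ^ (α:ℝ) / (1 - α) * u * u ^ (-α)) := by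
      rw [hcfun]
      norm_num
    rw [hb, Real.one_rpow, hrw1, hrw2]
    ring
  rw [hc0] at hfinal
  exact hfinal
end

section
/- Let (Xᵢ)_{i≥1} be identically distributed random vectors in ℝ^d whose norm ‖X₁‖ (Euclidean norm) has a regularly varying tail of index −α with α ∈ (0,1), and let (aₙ) be positive reals with n·P(‖X₁‖ > aₙ) → 1 as n → ∞. Then for every δ > 0, lim_{u↓0} limsup_{n→∞} P( max_{1≤k≤n} ‖ ( Σ_{i=1}^k ( (Xᵢʲ/aₙ)·1{|Xᵢʲ| ≤ u·aₙ} − E[(X₁ʲ/aₙ)·1{|X₁ʲ| ≤ u·aₙ}] ) )_{j=1,…,d} ‖ > δ ) = 0. -/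
open MeasureTheory Filter Topology

set_option maxHeartbeats 2000000

/-- geometric sum bound over an arbitrary finset -/
lemma aux_geom_sum_le {r : ℝ} (h0 : 0 ≤ r) (h1 : r < 1) (s : Finset ℕ) :
    ∑ m ∈ s, r ^ m ≤ (1 - r)⁻¹ := by
  classical
  obtain ⟨N, hN⟩ : ∃ N, ∀ m ∈ s, m < N := ⟨(s.sup id) + 1, fun m hm =>
    Nat.lt_succ_of_le (Finset.le_sup (f := id) hm)⟩
  have h2 : (0:ℝ) < 1 - r := by linarith
  calc ∑ m ∈ s, r ^ m ≤ ∑ m ∈ Finset.range N, r ^ m := by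
        apply Finset.sum_le_sum_of_subset_of_nonneg
        · intro m hm; exact Finset.mem_range.2 (hN m hm)
        · intro m _ _; positivity
    _ = (1 - r ^ N) / (1 - r) := by
        rw [geom_sum_eq (by linarith : r ≠ 1)]
        rw [← neg_div_neg_eq]; ring_nf
    _ ≤ 1 / (1 - r) := by
        apply div_le_div_of_nonneg_right ?_ h2.le
        have : (0:ℝ) ≤ r ^ N := by positivity
        linarith
    _ = (1 - r)⁻¹ := one_div _

/-- Euclidean (ℓ²) norm is at most the ℓ¹ norm. -/
lemma aux_l2_le_l1 {d : ℕ} (v : Fin d → ℝ) :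
    ‖(WithLp.equiv 2 (Fin d → ℝ)).symm v‖ ≤ ∑ j, |v j| := by
  rw [EuclideanSpace.norm_eq]
  have h1 : ∀ j : Fin d, ‖(WithLp.equiv 2 (Fin d → ℝ)).symm v j‖ = |v j| := fun j => by
    exact Real.norm_eq_abs _
  have h2 : ∑ j, ‖(WithLp.equiv 2 (Fin d → ℝ)).symm v j‖ ^ 2 ≤ (∑ j, |v j|) ^ 2 := by
    simp_rw [h1]
    calc ∑ j, |v j| ^ 2 ≤ ∑ j, |v j| * ∑ i, |v i| := by
          apply Finset.sum_le_sum
          intro j _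
          rw [sq]
          exact mul_le_mul_of_nonneg_left
            (Finset.single_le_sum (fun i _ => abs_nonneg (v i)) (Finset.mem_univ j))
            (abs_nonneg _)
      _ = (∑ j, |v j|) ^ 2 := by rw [← Finset.sum_mul, sq]
  calc Real.sqrt (∑ j, ‖(WithLp.equiv 2 (Fin d → ℝ)).symm v j‖ ^ 2)
      ≤ Real.sqrt ((∑ j, |v j|) ^ 2) := Real.sqrt_le_sqrt h2
    _ = ∑ j, |v j| := Real.sqrt_sq (Finset.sum_nonneg fun j _ => abs_nonneg _)

/-- pointwise dyadic decomposition bound -/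
lemma aux_dyadic {y c x0 : ℝ} (hy : 0 ≤ y) (hc : 0 < c) (hx0 : 0 < x0) (M : ℕ)
    (hM : c * (2:ℝ)⁻¹ ^ M ≤ 2 * x0) :
    min y c ≤ 2 * x0 + ∑ m ∈ (Finset.range (M+1)).filter
        (fun m => x0 ≤ c * (2:ℝ)⁻¹ ^ (m+1)),
      (if c * (2:ℝ)⁻¹ ^ (m+1) < y then c * (2:ℝ)⁻¹ ^ m else 0) := by
  classical
  set S := (Finset.range (M+1)).filter (fun m => x0 ≤ c * (2:ℝ)⁻¹ ^ (m+1)) with hS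
  have hterm : ∀ m ∈ S, (0:ℝ) ≤ (if c * (2:ℝ)⁻¹ ^ (m+1) < y then c * (2:ℝ)⁻¹ ^ m else 0) := by
    intro m _; split <;> positivity
  have hsum0 : (0:ℝ) ≤ ∑ m ∈ S, (if c * (2:ℝ)⁻¹ ^ (m+1) < y then c * (2:ℝ)⁻¹ ^ m else 0) :=
    Finset.sum_nonneg hterm
  rcases le_or_gt y (2*x0) with h | h
  · have : min y c ≤ 2 * x0 := le_trans (min_le_left _ _) h
    linarith
  rcases le_or_gt c (2*x0) with h2 | h2
  · have : min y c ≤ 2 * x0 := le_trans (min_le_right _ _) h2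
    linarith
  -- now y > 2x0 and c > 2x0
  have hy0 : 0 < y := lt_trans (by positivity) h
  have hex : ∃ m : ℕ, c * (2:ℝ)⁻¹ ^ (m+1) < y := by
    obtain ⟨m, hm⟩ := exists_pow_lt_of_lt_one (show (0:ℝ) < y / c from div_pos hy0 hc)
      (show (2:ℝ)⁻¹ < 1 by norm_num)
    exact ⟨m, by
      have h1 : c * (2:ℝ)⁻¹ ^ (m+1) ≤ c * (2:ℝ)⁻¹ ^ m := by
        apply mul_le_mul_of_nonneg_left (pow_le_pow_of_le_one (by norm_num) (by norm_num)
          (Nat.le_succ m)) hc.le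
      have h2 : c * (2:ℝ)⁻¹ ^ m < y := by
        rw [mul_comm, ← lt_div_iff₀ hc]
        exact hm
      exact lt_of_le_of_lt h1 h2⟩
  set m0 := Nat.find hex with hm0def
  have hm0 : c * (2:ℝ)⁻¹ ^ (m0+1) < y := Nat.find_spec hex
  have hup : min y c ≤ c * (2:ℝ)⁻¹ ^ m0 := by
    rcases Nat.eq_zero_or_pos m0 with h0 | h0
    · rw [h0]; simpa using min_le_right y c
    · obtain ⟨s, hs⟩ := Nat.exists_eq_succ_of_ne_zero h0.ne'
      have := Nat.find_min hex (m := s) (by omega)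
      push_neg at this
      rw [hs]
      exact le_trans (min_le_left _ _) (by simpa [Nat.succ_eq_add_one] using this)
  have hgt : 2 * x0 < c * (2:ℝ)⁻¹ ^ m0 := by
    rcases Nat.eq_zero_or_pos m0 with h0 | h0
    · rw [h0]; simpa using h2
    · have hyle : y ≤ c * (2:ℝ)⁻¹ ^ m0 := by
        obtain ⟨s, hs⟩ := Nat.exists_eq_succ_of_ne_zero h0.ne'
        have := Nat.find_min hex (m := s) (by omega)
        push_neg at this
        rw [hs]; simpa [Nat.succ_eq_add_one] using this
      exact lt_of_lt_of_le h hyle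
  have hmem : m0 ∈ S := by
    rw [hS, Finset.mem_filter, Finset.mem_range]
    constructor
    · -- m0 < M + 1
      by_contra hcon
      push_neg at hcon
      have : c * (2:ℝ)⁻¹ ^ m0 ≤ c * (2:ℝ)⁻¹ ^ M :=
        mul_le_mul_of_nonneg_left (pow_le_pow_of_le_one (by norm_num) (by norm_num)
          (by omega)) hc.le
      linarith
    · -- x0 ≤ c * 2⁻¹^(m0+1)
      have : c * (2:ℝ)⁻¹ ^ (m0+1) = c * (2:ℝ)⁻¹ ^ m0 / 2 := by ring
      rw [this]; linarith
  calc min y c ≤ c * (2:ℝ)⁻¹ ^ m0 := hup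
    _ = (if c * (2:ℝ)⁻¹ ^ (m0+1) < y then c * (2:ℝ)⁻¹ ^ m0 else 0) := by rw [if_pos hm0]
    _ ≤ ∑ m ∈ S, (if c * (2:ℝ)⁻¹ ^ (m+1) < y then c * (2:ℝ)⁻¹ ^ m else 0) :=
        Finset.single_le_sum hterm hmem
    _ ≤ 2 * x0 + ∑ m ∈ S, (if c * (2:ℝ)⁻¹ ^ (m+1) < y then c * (2:ℝ)⁻¹ ^ m else 0) := by
        linarith


/-- Vanishing small jumps (Condition 3.3 holds automatically when `α ∈ (0,1)`): for
identically distributed random vectors whose norm has a regularly varying tail of index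
`-α`, `α ∈ (0,1)`, and `n P(‖X₁‖ > aₙ) → 1`, the maximal deviation of the centered
small-jump partial sums vanishes: `lim_{u↓0} limsup_n I(u,n) = 0`. -/
theorem vanishing_small_jumps
    {Ω : Type*} [MeasurableSpace Ω] (ℙ : Measure Ω) [IsProbabilityMeasure ℙ]
    {d : ℕ} (X : ℕ → Ω → EuclideanSpace ℝ (Fin d))
    (hmeas : ∀ i, Measurable (X i))
    (hident : ∀ i, 1 ≤ i → Measure.map (X i) ℙ = Measure.map (X 1) ℙ)
    (α : ℝ) (hα : 0 < α) (hα1 : α < 1)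
    (hpos : ∀ x : ℝ, 0 < x → 0 < ℙ {ω | ‖X 1 ω‖ > x})
    (hrv : ∀ l : ℝ, 0 < l →
      Tendsto (fun x : ℝ => (ℙ {ω | ‖X 1 ω‖ > l * x}).toReal / (ℙ {ω | ‖X 1 ω‖ > x}).toReal)
        atTop (nhds (l ^ (-α))))
    (a : ℕ → ℝ) (hapos : ∀ n, 0 < a n)
    (han : Tendsto (fun n : ℕ => (n : ℝ) * (ℙ {ω | ‖X 1 ω‖ > a n}).toReal) atTop (nhds 1))
    (δ : ℝ) (hδ : 0 < δ) :
    Tendsto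
      (fun u : ℝ =>
        Filter.limsup
          (fun n : ℕ =>
            (ℙ {ω | ∃ k, 1 ≤ k ∧ k ≤ n ∧
              δ < ‖(WithLp.equiv 2 (Fin d → ℝ)).symm (fun j =>
                ∑ i ∈ Finset.Icc 1 k,
                  ((if |X i ω j| ≤ u * a n then X i ω j / a n else 0)
                    - ∫ ω', (if |X 1 ω' j| ≤ u * a n then X 1 ω' j / a n else 0) ∂ℙ))‖}).toReal)
          atTop)
      (nhdsWithin 0 (Set.Ioi 0)) (nhds 0) := by
  set F : ℝ → ℝ := fun x => (ℙ {ω | ‖X 1 ω‖ > x}).toReal with hFdef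
  have hFanti : ∀ {x y : ℝ}, x ≤ y → F y ≤ F x := by
    intro x y hxy
    exact ENNReal.toReal_mono (measure_ne_top _ _)
      (measure_mono (fun ω hω => lt_of_le_of_lt hxy hω))
  have hFpos : ∀ x : ℝ, 0 < x → 0 < F x := fun x hx =>
    ENNReal.toReal_pos (hpos x hx).ne' (measure_ne_top _ _)
  have hFnonneg : ∀ x : ℝ, 0 ≤ F x := fun x => ENNReal.toReal_nonneg
  have hFle1 : ∀ x : ℝ, F x ≤ 1 := fun x => by
    simpa using ENNReal.toReal_mono ENNReal.one_ne_top (prob_le_one)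
  -- the constant ρ
  set ρ : ℝ := ((2:ℝ) ^ α + 2) / 2 with hρdef
  have h2α1 : (1:ℝ) < (2:ℝ) ^ α := by
    calc (1:ℝ) = (2:ℝ) ^ (0:ℝ) := by rw [Real.rpow_zero]
    _ < (2:ℝ) ^ α := Real.rpow_lt_rpow_of_exponent_lt one_lt_two hα
  have h2α2 : (2:ℝ) ^ α < 2 := by
    calc (2:ℝ) ^ α < (2:ℝ) ^ (1:ℝ) := Real.rpow_lt_rpow_of_exponent_lt one_lt_two hα1
    _ = 2 := Real.rpow_one 2
  have hρ1 : 1 < ρ := by rw [hρdef]; linarith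
  have hρ2 : ρ < 2 := by rw [hρdef]; linarith
  have hρα : (2:ℝ) ^ α < ρ := by rw [hρdef]; linarith
  have hρ0 : 0 < ρ := by linarith
  -- obtain x0 with the one-step doubling bound
  obtain ⟨x1, hx1⟩ : ∃ x1 : ℝ, ∀ x ≥ x1, F (2⁻¹ * x) / F x < ρ := by
    have h := hrv 2⁻¹ (by norm_num)
    have heq : ((2:ℝ)⁻¹) ^ (-α) = (2:ℝ) ^ α := by
      rw [Real.inv_rpow (by norm_num : (0:ℝ) ≤ 2), Real.rpow_neg (by norm_num : (0:ℝ) ≤ 2),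
        inv_inv]
    rw [heq] at h
    exact eventually_atTop.1 (h.eventually_lt_const hρα)
  set x0 : ℝ := max x1 1 with hx0def
  have hx0pos : (0:ℝ) < x0 := lt_of_lt_of_le one_pos (le_max_right _ _)
  have hchain1 : ∀ x : ℝ, x0 ≤ x → F (2⁻¹ * x) ≤ ρ * F x := by
    intro x hx
    have hxpos : 0 < x := lt_of_lt_of_le hx0pos hx
    have h := hx1 x (le_trans (le_max_left _ _) hx)
    have hFx : 0 < F x := hFpos x hxpos
    calc F (2⁻¹ * x) = F (2⁻¹ * x) / F x * F x := by field_simp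
    _ ≤ ρ * F x := mul_le_mul_of_nonneg_right h.le (hFnonneg x)
  -- downward chain
  have hchaind : ∀ (k : ℕ) (c : ℝ), x0 ≤ c * (2:ℝ)⁻¹ ^ k → F (c * (2:ℝ)⁻¹ ^ k) ≤ ρ ^ k * F c := by
    intro k
    induction k with
    | zero => intro c _; simp
    | succ s ih =>
      intro c hc
      have hcpos : 0 < c := by
        by_contra hcon
        push_neg at hcon
        have : c * (2:ℝ)⁻¹ ^ (s+1) ≤ 0 := mul_nonpos_of_nonpos_of_nonneg hcon (by positivity)
        linarith
      have hcs : x0 ≤ c * (2:ℝ)⁻¹ ^ s := le_trans hc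
        (mul_le_mul_of_nonneg_left (pow_le_pow_of_le_one (by norm_num) (by norm_num)
          (Nat.le_succ s)) hcpos.le)
      have h1 := hchain1 (c * (2:ℝ)⁻¹ ^ s) hcs
      have heq : (2:ℝ)⁻¹ * (c * (2:ℝ)⁻¹ ^ s) = c * (2:ℝ)⁻¹ ^ (s + 1) := by ring
      rw [heq] at h1
      calc F (c * (2:ℝ)⁻¹ ^ (s+1)) ≤ ρ * F (c * (2:ℝ)⁻¹ ^ s) := h1
      _ ≤ ρ * (ρ ^ s * F c) := mul_le_mul_of_nonneg_left (ih c hcs) hρ0.le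
      _ = ρ ^ (s+1) * F c := by ring
  -- upward chain
  have hchainu : ∀ k : ℕ, F x0 ≤ ρ ^ k * F ((2:ℝ) ^ k * x0) := by
    intro k
    induction k with
    | zero => simp
    | succ s ih =>
      have h1 := hchain1 ((2:ℝ) ^ (s+1) * x0) (by
        nlinarith [one_le_pow₀ (by norm_num : (1:ℝ) ≤ 2) (n := s+1), hx0pos])
      have heq : (2:ℝ)⁻¹ * ((2:ℝ) ^ (s+1) * x0) = (2:ℝ) ^ s * x0 := by ring
      rw [heq] at h1
      calc F x0 ≤ ρ ^ s * F ((2:ℝ) ^ s * x0) := ih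
      _ ≤ ρ ^ s * (ρ * F ((2:ℝ) ^ (s+1) * x0)) := mul_le_mul_of_nonneg_left h1 (by positivity)
      _ = ρ ^ (s+1) * F ((2:ℝ) ^ (s+1) * x0) := by ring
  -- a n → ∞
  have haT : Tendsto a atTop atTop := by
    rw [tendsto_atTop]
    intro M
    set M' : ℝ := max M 1 with hM'def
    have hM'pos : (0:ℝ) < M' := lt_of_lt_of_le one_pos (le_max_right _ _)
    have hp : 0 < F M' := hFpos _ hM'pos
    obtain ⟨N, hN⟩ := exists_nat_gt (2 / F M')
    filter_upwards [han.eventually_lt_const (by norm_num : (1:ℝ) < 2),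
      eventually_ge_atTop N] with n h1 h2
    by_contra hcon
    push_neg at hcon
    have hanM : a n ≤ M' := le_trans hcon.le (le_max_left _ _)
    have h3 : F M' ≤ F (a n) := hFanti hanM
    have h4 : (2:ℝ) < N * F M' := by
      rw [div_lt_iff₀ hp] at hN
      linarith
    have h5 : (N:ℝ) * F M' ≤ (n:ℝ) * F (a n) :=
      mul_le_mul (by exact_mod_cast h2) h3 (hFnonneg _) (Nat.cast_nonneg n)
    linarith
  -- x * F x → ∞
  have hφ : Tendsto (fun x : ℝ => x * F x) atTop atTop := by
    rw [tendsto_atTop]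
    intro b
    set A : ℝ := x0 * F x0 / ρ with hAdef
    have hApos : 0 < A := by
      apply div_pos (mul_pos hx0pos (hFpos _ hx0pos)) hρ0
    have h2ρ : (1:ℝ) < 2 / ρ := (one_lt_div hρ0).2 hρ2
    obtain ⟨j, hj⟩ : ∃ j : ℕ, b ≤ A * (2/ρ) ^ j := by
      have := (tendsto_pow_atTop_atTop_of_one_lt h2ρ).const_mul_atTop hApos
      exact (this.eventually_ge_atTop b).exists
    filter_upwards [eventually_ge_atTop ((2:ℝ) ^ j * x0)] with x hx
    have hxpos : 0 < x := lt_of_lt_of_le (by positivity) hx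
    -- find the dyadic bin
    have hex : ∃ k : ℕ, x < 2 ^ (k+1) * x0 := by
      obtain ⟨k, hk⟩ := pow_unbounded_of_one_lt (x / x0) (by norm_num : (1:ℝ) < 2)
      exact ⟨k, by
        rw [div_lt_iff₀ hx0pos] at hk
        have : (2:ℝ) ^ k ≤ 2 ^ (k+1) := by
          apply pow_le_pow_right₀ (by norm_num) (Nat.le_succ k)
        nlinarith⟩
    set k := Nat.find hex with hkdef
    have hk1 : x < 2 ^ (k+1) * x0 := Nat.find_spec hex
    have hk2 : (2:ℝ) ^ k * x0 ≤ x := by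
      rcases Nat.eq_zero_or_pos k with h0 | h0
      · rw [h0]
        calc (2:ℝ) ^ 0 * x0 = x0 := by ring
        _ ≤ 2 ^ j * x0 := le_mul_of_one_le_left hx0pos.le (one_le_pow₀ (by norm_num))
        _ ≤ x := hx
      · obtain ⟨s, hs⟩ := Nat.exists_eq_succ_of_ne_zero h0.ne'
        have := Nat.find_min hex (m := s) (by omega)
        push_neg at this
        rw [hs]; exact this
    have hjk : j ≤ k := by
      by_contra hcon
      push_neg at hcon
      have : (2:ℝ) ^ (k+1) ≤ 2 ^ j := pow_le_pow_right₀ (by norm_num) (by omega)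
      nlinarith
    -- lower bound
    have hFx : F ((2:ℝ) ^ (k+1) * x0) ≤ F x := hFanti hk1.le
    have hchain := hchainu (k+1)
    have hFlow : F x0 / ρ ^ (k+1) ≤ F ((2:ℝ) ^ (k+1) * x0) := by
      rw [div_le_iff₀ (by positivity)]
      calc F x0 ≤ ρ ^ (k+1) * F ((2:ℝ) ^ (k+1) * x0) := hchain
      _ = F ((2:ℝ) ^ (k+1) * x0) * ρ ^ (k+1) := by ring
    have key : A * (2/ρ) ^ k ≤ x * F x := by
      have h1 : A * (2/ρ) ^ k = (2:ℝ) ^ k * x0 * (F x0 / ρ ^ (k+1)) := by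
        rw [hAdef, div_pow]
        field_simp
        ring
      rw [h1]
      apply mul_le_mul hk2 (le_trans hFlow hFx) (by positivity) hxpos.le
    have h2 : A * (2/ρ) ^ j ≤ A * (2/ρ) ^ k :=
      mul_le_mul_of_nonneg_left (pow_le_pow_right₀ (by linarith) hjk) hApos.le
    linarith
  -- n / a n → 0
  have hna : Tendsto (fun n : ℕ => (n:ℝ) / a n) atTop (𝓝 0) := by
    have h1 : Tendsto (fun n : ℕ => ((n:ℝ) * F (a n)) * (a n * F (a n))⁻¹) atTop (𝓝 (1 * 0)) :=
      han.mul (hφ.comp haT).inv_tendsto_atTop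
    rw [one_mul] at h1
    apply h1.congr
    intro n
    have hFa : F (a n) ≠ 0 := (hFpos _ (hapos n)).ne'
    have han0 : a n ≠ 0 := (hapos n).ne'
    field_simp
  -- Karamata-type bound
  have hXnorm : Measurable fun ω => ‖X 1 ω‖ := (hmeas 1).norm
  set CC : ℝ := 2 * ρ / (2 - ρ) with hCCdef
  have hCCpos : 0 < CC := by rw [hCCdef]; apply div_pos (by linarith) (by linarith)
  have hmin_int : ∀ c : ℝ, 0 < c → Integrable (fun ω => min ‖X 1 ω‖ c) ℙ := by
    intro c hc
    apply (integrable_const c).mono' (hXnorm.min measurable_const).aestronglyMeasurable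
    filter_upwards with ω
    rw [Real.norm_eq_abs, abs_of_nonneg (le_min (norm_nonneg _) hc.le)]
    exact min_le_right _ _
  have hkar : ∀ c : ℝ, 0 < c →
      ∫ ω, min ‖X 1 ω‖ c ∂ℙ ≤ 2 * x0 + CC * (c * F c) := by
    intro c hc
    classical
    obtain ⟨M, hM⟩ : ∃ M : ℕ, c * (2:ℝ)⁻¹ ^ M ≤ 2 * x0 := by
      obtain ⟨M, hM⟩ := exists_pow_lt_of_lt_one (show (0:ℝ) < 2 * x0 / c from by positivity)
        (show (2:ℝ)⁻¹ < 1 by norm_num)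
      exact ⟨M, by rw [← le_div_iff₀' hc]; exact hM.le⟩
    set S := (Finset.range (M+1)).filter (fun m => x0 ≤ c * (2:ℝ)⁻¹ ^ (m+1)) with hSdef
    have hmin_int' := hmin_int c hc
    have hsets : ∀ m : ℕ, MeasurableSet {ω | c * (2:ℝ)⁻¹ ^ (m+1) < ‖X 1 ω‖} :=
      fun m => measurableSet_lt measurable_const hXnorm
    have hind_int : ∀ m : ℕ, Integrable
        (fun ω => if c * (2:ℝ)⁻¹ ^ (m+1) < ‖X 1 ω‖ then c * (2:ℝ)⁻¹ ^ m else 0) ℙ := by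
      intro m
      have : (fun ω => if c * (2:ℝ)⁻¹ ^ (m+1) < ‖X 1 ω‖ then c * (2:ℝ)⁻¹ ^ m else 0)
          = Set.indicator {ω | c * (2:ℝ)⁻¹ ^ (m+1) < ‖X 1 ω‖} (fun _ => c * (2:ℝ)⁻¹ ^ m) := by
        funext ω; rw [Set.indicator_apply]; rfl
      rw [this]
      exact (integrable_const _).indicator (hsets m)
    have hstep1 : ∫ ω, min ‖X 1 ω‖ c ∂ℙ ≤
        2 * x0 + ∑ m ∈ S, (c * (2:ℝ)⁻¹ ^ m) * F (c * (2:ℝ)⁻¹ ^ (m+1)) := by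
      have hrhs_int : Integrable (fun ω => 2 * x0 +
          ∑ m ∈ S, (if c * (2:ℝ)⁻¹ ^ (m+1) < ‖X 1 ω‖ then c * (2:ℝ)⁻¹ ^ m else 0)) ℙ :=
        (integrable_const _).add (integrable_finset_sum S (fun m _ => hind_int m))
      have hmono := integral_mono hmin_int' hrhs_int (fun ω =>
        aux_dyadic (norm_nonneg (X 1 ω)) hc hx0pos M hM)
      refine hmono.trans (le_of_eq ?_)
      rw [integral_add (integrable_const _) (integrable_finset_sum S (fun m _ => hind_int m)),
        integral_const, integral_finset_sum S (fun m _ => hind_int m)]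
      simp only [measure_univ, ENNReal.toReal_one, smul_eq_mul, one_mul, probReal_univ]
      congr 1
      apply Finset.sum_congr rfl
      intro m _
      have : (fun ω => if c * (2:ℝ)⁻¹ ^ (m+1) < ‖X 1 ω‖ then c * (2:ℝ)⁻¹ ^ m else 0)
          = Set.indicator {ω | c * (2:ℝ)⁻¹ ^ (m+1) < ‖X 1 ω‖} (fun _ => c * (2:ℝ)⁻¹ ^ m) := by
        funext ω; rw [Set.indicator_apply]; rfl
      rw [this, integral_indicator_const _ (hsets m), smul_eq_mul, mul_comm]
      rfl
    have hstep2 : ∑ m ∈ S, (c * (2:ℝ)⁻¹ ^ m) * F (c * (2:ℝ)⁻¹ ^ (m+1)) ≤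
        CC * (c * F c) := by
      have hbound : ∀ m ∈ S, (c * (2:ℝ)⁻¹ ^ m) * F (c * (2:ℝ)⁻¹ ^ (m+1)) ≤
          (c * ρ * F c) * (ρ/2) ^ m := by
        intro m hm
        rw [hSdef, Finset.mem_filter] at hm
        have hchain := hchaind (m+1) c hm.2
        calc (c * (2:ℝ)⁻¹ ^ m) * F (c * (2:ℝ)⁻¹ ^ (m+1))
            ≤ (c * (2:ℝ)⁻¹ ^ m) * (ρ ^ (m+1) * F c) :=
              mul_le_mul_of_nonneg_left hchain (by positivity)
          _ = (c * ρ * F c) * (ρ/2) ^ m := by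
              rw [div_eq_mul_inv, mul_pow, pow_succ]
              ring
      calc ∑ m ∈ S, (c * (2:ℝ)⁻¹ ^ m) * F (c * (2:ℝ)⁻¹ ^ (m+1))
          ≤ ∑ m ∈ S, (c * ρ * F c) * (ρ/2) ^ m := Finset.sum_le_sum hbound
        _ = (c * ρ * F c) * ∑ m ∈ S, (ρ/2) ^ m := by rw [Finset.mul_sum]
        _ ≤ (c * ρ * F c) * (1 - ρ/2)⁻¹ := by
            apply mul_le_mul_of_nonneg_left
              (aux_geom_sum_le (by positivity) (by linarith) S) (by positivity)
        _ = CC * (c * F c) := by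
            rw [hCCdef, show (1 : ℝ) - ρ/2 = (2 - ρ)/2 by ring, inv_div]
            field_simp
    linarith
  -- coordinate bound
  have hcoord : ∀ (j : Fin d) (x : EuclideanSpace ℝ (Fin d)), |x j| ≤ ‖x‖ := by
    intro j x
    rw [EuclideanSpace.norm_eq x, show |x j| = Real.sqrt (‖x j‖^2) by
      rw [Real.sqrt_sq_eq_abs, Real.norm_eq_abs, abs_abs]]
    apply Real.sqrt_le_sqrt
    exact Finset.single_le_sum (f := fun i : Fin d => ‖x i‖ ^ 2)
      (fun i _ => by positivity) (Finset.mem_univ j)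
  -- the main bound for fixed u and n
  have hbound : ∀ u : ℝ, 0 < u → ∀ n : ℕ,
      (ℙ {ω | ∃ k, 1 ≤ k ∧ k ≤ n ∧
        δ < ‖(WithLp.equiv 2 (Fin d → ℝ)).symm (fun j =>
          ∑ i ∈ Finset.Icc 1 k,
            ((if |X i ω j| ≤ u * a n then X i ω j / a n else 0)
              - ∫ ω', (if |X 1 ω' j| ≤ u * a n then X 1 ω' j / a n else 0) ∂ℙ))‖}).toReal
      ≤ (2 * d / δ) * (2 * x0 * ((n:ℝ) / a n) + CC * (u * n * F (u * a n))) := by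
    intro u hu n
    classical
    set c := u * a n with hcdef
    have hc : 0 < c := mul_pos hu (hapos n)
    set g : Fin d → EuclideanSpace ℝ (Fin d) → ℝ :=
      fun j x => if |x j| ≤ u * a n then x j / a n else 0 with hgdef
    have hgmeas : ∀ j, Measurable (g j) := by
      intro j
      have hj : Measurable (fun x : EuclideanSpace ℝ (Fin d) => x j) :=
        (measurable_pi_apply j).comp (WithLp.measurable_ofLp 2 (Fin d → ℝ))
      exact Measurable.ite (measurableSet_le hj.abs measurable_const)
        (hj.div_const _) measurable_const
    have hgbound : ∀ (j : Fin d) (x : EuclideanSpace ℝ (Fin d)),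
        |g j x| ≤ min ‖x‖ c / a n := by
      intro j x
      rw [hgdef]
      dsimp only
      split_ifs with hif
      · rw [abs_div, abs_of_pos (hapos n)]
        apply div_le_div_of_nonneg_right ?_ (hapos n).le
        exact le_min (hcoord j x) (hif.trans (le_of_eq hcdef.symm))
      · rw [abs_zero]
        apply div_nonneg (le_min (norm_nonneg _) hc.le) (hapos n).le
    have hgu : ∀ (j : Fin d) (x : EuclideanSpace ℝ (Fin d)), |g j x| ≤ u := by
      intro j x
      refine le_trans (hgbound j x) ?_
      rw [div_le_iff₀ (hapos n)]
      exact le_trans (min_le_right _ _) (le_of_eq (by rw [hcdef]))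
    have hTint : ∀ i j, Integrable (fun ω => g j (X i ω)) ℙ := by
      intro i j
      apply (integrable_const u).mono'
        (((hgmeas j).comp (hmeas i)).aestronglyMeasurable)
      filter_upwards with ω
      rw [Real.norm_eq_abs]
      exact hgu j (X i ω)
    have hTaint : ∀ i j, Integrable (fun ω => |g j (X i ω)|) ℙ := fun i j => (hTint i j).abs
    have hsame : ∀ i, 1 ≤ i → ∀ j, ∫ ω, |g j (X i ω)| ∂ℙ = ∫ ω, |g j (X 1 ω)| ∂ℙ := by
      intro i hi j
      rw [← integral_map (hmeas i).aemeasurable ((hgmeas j).abs).aestronglyMeasurable,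
        hident i hi,
        integral_map (hmeas 1).aemeasurable ((hgmeas j).abs).aestronglyMeasurable]
    set Z : Ω → ℝ := fun ω => ∑ j : Fin d, ∑ i ∈ Finset.Icc 1 n,
      (|g j (X i ω)| + ∫ ω', |g j (X 1 ω')| ∂ℙ) with hZdef
    have hZnn : ∀ ω, 0 ≤ Z ω := by
      intro ω
      apply Finset.sum_nonneg
      intro j _
      apply Finset.sum_nonneg
      intro i _
      have : 0 ≤ ∫ ω', |g j (X 1 ω')| ∂ℙ := integral_nonneg (fun ω' => abs_nonneg _)
      positivity
    have hZint : Integrable Z ℙ :=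
      integrable_finset_sum _ (fun j _ => integrable_finset_sum _
        (fun i _ => (hTaint i j).add (integrable_const _)))
    -- event inclusion
    have hsub : {ω | ∃ k, 1 ≤ k ∧ k ≤ n ∧
        δ < ‖(WithLp.equiv 2 (Fin d → ℝ)).symm (fun j =>
          ∑ i ∈ Finset.Icc 1 k,
            ((if |X i ω j| ≤ u * a n then X i ω j / a n else 0)
              - ∫ ω', (if |X 1 ω' j| ≤ u * a n then X 1 ω' j / a n else 0) ∂ℙ))‖}
        ⊆ {ω | δ ≤ Z ω} := by
      intro ω hω
      obtain ⟨k, hk1, hkn, hδk⟩ := hω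
      set v : Fin d → ℝ := fun j => ∑ i ∈ Finset.Icc 1 k,
        (g j (X i ω) - ∫ ω', g j (X 1 ω') ∂ℙ) with hvdef
      have hδv : δ < ‖(WithLp.equiv 2 (Fin d → ℝ)).symm v‖ := hδk
      have h1 : ‖(WithLp.equiv 2 (Fin d → ℝ)).symm v‖ ≤ ∑ j, |v j| := aux_l2_le_l1 v
      have h2 : ∀ j : Fin d, |v j| ≤ ∑ i ∈ Finset.Icc 1 n,
          (|g j (X i ω)| + ∫ ω', |g j (X 1 ω')| ∂ℙ) := by
        intro j
        calc |v j| ≤ ∑ i ∈ Finset.Icc 1 k, |g j (X i ω) - ∫ ω', g j (X 1 ω') ∂ℙ| :=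
              Finset.abs_sum_le_sum_abs _ _
          _ ≤ ∑ i ∈ Finset.Icc 1 k, (|g j (X i ω)| + ∫ ω', |g j (X 1 ω')| ∂ℙ) := by
              apply Finset.sum_le_sum
              intro i _
              calc |g j (X i ω) - ∫ ω', g j (X 1 ω') ∂ℙ|
                  ≤ |g j (X i ω)| + |∫ ω', g j (X 1 ω') ∂ℙ| := abs_sub _ _
                _ ≤ |g j (X i ω)| + ∫ ω', |g j (X 1 ω')| ∂ℙ := by
                    have h := norm_integral_le_integral_norm (f := fun ω' => g j (X 1 ω')) (μ := ℙ)
                    simp only [Real.norm_eq_abs] at h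
                    linarith
          _ ≤ ∑ i ∈ Finset.Icc 1 n, (|g j (X i ω)| + ∫ ω', |g j (X 1 ω')| ∂ℙ) := by
              apply Finset.sum_le_sum_of_subset_of_nonneg
                (Finset.Icc_subset_Icc_right hkn)
              intro i _ _
              have : 0 ≤ ∫ ω', |g j (X 1 ω')| ∂ℙ := integral_nonneg (fun ω' => abs_nonneg _)
              positivity
      have h3 : ∑ j, |v j| ≤ Z ω := Finset.sum_le_sum (fun j _ => h2 j)
      exact le_of_lt (lt_of_lt_of_le hδv (le_trans h1 h3))
    -- Markov's inequality
    have hmarkov : δ * (ℙ {ω | δ ≤ Z ω}).toReal ≤ ∫ ω, Z ω ∂ℙ :=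
      mul_meas_ge_le_integral_of_nonneg (Filter.Eventually.of_forall hZnn) hZint δ
    have hmono : (ℙ {ω | ∃ k, 1 ≤ k ∧ k ≤ n ∧
        δ < ‖(WithLp.equiv 2 (Fin d → ℝ)).symm (fun j =>
          ∑ i ∈ Finset.Icc 1 k,
            ((if |X i ω j| ≤ u * a n then X i ω j / a n else 0)
              - ∫ ω', (if |X 1 ω' j| ≤ u * a n then X 1 ω' j / a n else 0) ∂ℙ))‖}).toReal
        ≤ (ℙ {ω | δ ≤ Z ω}).toReal :=
      ENNReal.toReal_mono (measure_ne_top _ _) (measure_mono hsub)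
    -- compute the integral of Z
    have hZval : ∫ ω, Z ω ∂ℙ = 2 * n * ∑ j : Fin d, ∫ ω, |g j (X 1 ω)| ∂ℙ := by
      have houter := integral_finset_sum (μ := ℙ) (Finset.univ : Finset (Fin d))
        (f := fun j ω => ∑ i ∈ Finset.Icc 1 n, (|g j (X i ω)| + ∫ ω', |g j (X 1 ω')| ∂ℙ))
        (fun j _ => integrable_finset_sum _ (fun i _ => (hTaint i j).add (integrable_const _)))
      rw [hZdef]
      rw [houter, Finset.mul_sum]
      apply Finset.sum_congr rfl
      intro j _
      have hinner := integral_finset_sum (μ := ℙ) (Finset.Icc 1 n)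
        (f := fun i ω => |g j (X i ω)| + ∫ ω', |g j (X 1 ω')| ∂ℙ)
        (fun i _ => (hTaint i j).add (integrable_const _))
      rw [hinner]
      have : ∀ i ∈ Finset.Icc 1 n, ∫ ω, (|g j (X i ω)| + ∫ ω', |g j (X 1 ω')| ∂ℙ) ∂ℙ
          = 2 * ∫ ω, |g j (X 1 ω)| ∂ℙ := by
        intro i hi
        rw [integral_add (hTaint i j) (integrable_const _), integral_const]
        rw [hsame i (Finset.mem_Icc.1 hi).1 j]
        simp only [measure_univ, ENNReal.toReal_one, smul_eq_mul, one_mul, probReal_univ]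
        ring
      rw [Finset.sum_congr rfl this, Finset.sum_const, Nat.card_Icc]
      simp only [Nat.add_sub_cancel, nsmul_eq_mul]
      ring
    -- bound each individual expectation
    have hgint_le : ∀ j : Fin d, ∫ ω, |g j (X 1 ω)| ∂ℙ ≤ (2 * x0 + CC * (c * F c)) / a n := by
      intro j
      have h1 : ∫ ω, |g j (X 1 ω)| ∂ℙ ≤ ∫ ω, min ‖X 1 ω‖ c / a n ∂ℙ :=
        integral_mono (hTaint 1 j) ((hmin_int c hc).div_const _)
          (fun ω => hgbound j (X 1 ω))
      rw [integral_div] at h1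
      refine h1.trans ?_
      apply div_le_div_of_nonneg_right (hkar c hc) (hapos n).le
    -- put everything together
    have hZle : ∫ ω, Z ω ∂ℙ ≤ 2 * n * (d * ((2 * x0 + CC * (c * F c)) / a n)) := by
      rw [hZval]
      apply mul_le_mul_of_nonneg_left ?_ (by positivity)
      calc ∑ j : Fin d, ∫ ω, |g j (X 1 ω)| ∂ℙ
          ≤ ∑ _j : Fin d, (2 * x0 + CC * (c * F c)) / a n :=
            Finset.sum_le_sum (fun j _ => hgint_le j)
        _ = d * ((2 * x0 + CC * (c * F c)) / a n) := by
            rw [Finset.sum_const, Finset.card_univ, Fintype.card_fin, nsmul_eq_mul]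
    have hfinal : (ℙ {ω | ∃ k, 1 ≤ k ∧ k ≤ n ∧
        δ < ‖(WithLp.equiv 2 (Fin d → ℝ)).symm (fun j =>
          ∑ i ∈ Finset.Icc 1 k,
            ((if |X i ω j| ≤ u * a n then X i ω j / a n else 0)
              - ∫ ω', (if |X 1 ω' j| ≤ u * a n then X 1 ω' j / a n else 0) ∂ℙ))‖}).toReal
        ≤ (∫ ω, Z ω ∂ℙ) / δ := by
      rw [le_div_iff₀ hδ]
      calc _ ≤ (ℙ {ω | δ ≤ Z ω}).toReal * δ := mul_le_mul_of_nonneg_right hmono hδ.le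
        _ ≤ ∫ ω, Z ω ∂ℙ := by rw [mul_comm]; exact hmarkov
    refine hfinal.trans ?_
    have han0 : a n ≠ 0 := (hapos n).ne'
    calc (∫ ω, Z ω ∂ℙ) / δ ≤ (2 * n * (d * ((2 * x0 + CC * (c * F c)) / a n))) / δ :=
          div_le_div_of_nonneg_right hZle hδ.le
      _ = (2 * d / δ) * (2 * x0 * ((n:ℝ) / a n) + CC * (u * n * F (u * a n))) := by
          rw [hcdef]
          field_simp
  -- per-window limsup bound
  set D : ℝ := (2 * d / δ) * (1 + CC * (2 * ρ)) with hDdef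
  have hD0 : 0 ≤ D := by
    rw [hDdef]
    apply mul_nonneg (by positivity)
    nlinarith
  set G : ℝ → ℝ := fun u => Filter.limsup
    (fun n : ℕ =>
      (ℙ {ω | ∃ k, 1 ≤ k ∧ k ≤ n ∧
        δ < ‖(WithLp.equiv 2 (Fin d → ℝ)).symm (fun j =>
          ∑ i ∈ Finset.Icc 1 k,
            ((if |X i ω j| ≤ u * a n then X i ω j / a n else 0)
              - ∫ ω', (if |X 1 ω' j| ≤ u * a n then X 1 ω' j / a n else 0) ∂ℙ))‖}).toReal)
    atTop with hGdef
  have hG0 : ∀ u : ℝ, 0 ≤ G u := by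
    intro u
    exact le_limsup_of_frequently_le
      (Frequently.of_forall (fun n => ENNReal.toReal_nonneg))
      ⟨1, eventually_map.2 (Eventually.of_forall (fun n => by
        simpa using ENNReal.toReal_mono ENNReal.one_ne_top (prob_le_one)))⟩
  have hGle : ∀ (K : ℕ) (u : ℝ), (2:ℝ)⁻¹ ^ (K+1) < u → u ≤ (2:ℝ)⁻¹ ^ K →
      G u ≤ D * (ρ/2) ^ K := by
    intro K u hK1 hK2
    have hu : 0 < u := lt_trans (by positivity) hK1
    refine limsup_le_of_le (isCoboundedUnder_le_of_le atTop
      (fun n => ENNReal.toReal_nonneg)) ?_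
    have hev1 : ∀ᶠ n : ℕ in atTop, 2 * x0 * ((n:ℝ) / a n) ≤ (ρ/2) ^ K := by
      have h := hna.const_mul (2 * x0)
      rw [mul_zero] at h
      exact h.eventually_le_const (by positivity)
    have hev2 : ∀ᶠ n : ℕ in atTop, (n:ℝ) * F (a n) ≤ 2 :=
      han.eventually_le_const (by norm_num)
    have hev3 : ∀ᶠ n : ℕ in atTop, (2:ℝ) ^ (K+1) * x0 ≤ a n :=
      haT.eventually_ge_atTop _
    filter_upwards [hev1, hev2, hev3] with n h1 h2 h3
    refine (hbound u hu n).trans ?_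
    have hx0an : x0 ≤ a n * (2:ℝ)⁻¹ ^ (K+1) := by
      have hpow : (2:ℝ) ^ (K+1) * (2:ℝ)⁻¹ ^ (K+1) = 1 := by
        rw [← mul_pow]; norm_num
      calc x0 = (2:ℝ) ^ (K+1) * x0 * (2:ℝ)⁻¹ ^ (K+1) := by
            rw [mul_comm ((2:ℝ)^(K+1)) x0, mul_assoc, hpow, mul_one]
        _ ≤ a n * (2:ℝ)⁻¹ ^ (K+1) := by
            apply mul_le_mul_of_nonneg_right h3 (by positivity)
    have hFchain : F (u * a n) ≤ ρ ^ (K+1) * F (a n) := by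
      have hle : a n * (2:ℝ)⁻¹ ^ (K+1) ≤ u * a n := by
        rw [mul_comm u (a n)]
        exact mul_le_mul_of_nonneg_left hK1.le (hapos n).le
      exact le_trans (hFanti hle) (hchaind (K+1) (a n) hx0an)
    have e2 : u * (n:ℝ) * F (u * a n) ≤ 2 * ρ * (ρ/2) ^ K := by
      calc u * (n:ℝ) * F (u * a n) ≤ (2:ℝ)⁻¹ ^ K * (n:ℝ) * (ρ ^ (K+1) * F (a n)) := by
            apply mul_le_mul (mul_le_mul_of_nonneg_right hK2 (Nat.cast_nonneg n)) hFchain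
              (hFnonneg _) (by positivity)
        _ = ρ * ((ρ/2) ^ K * ((n:ℝ) * F (a n))) := by
            rw [div_eq_mul_inv, mul_pow, pow_succ]
            ring
        _ ≤ ρ * ((ρ/2) ^ K * 2) := by
            apply mul_le_mul_of_nonneg_left
              (mul_le_mul_of_nonneg_left h2 (by positivity)) hρ0.le
        _ = 2 * ρ * (ρ/2) ^ K := by ring
    calc (2 * (d:ℝ) / δ) * (2 * x0 * ((n:ℝ) / a n) + CC * (u * n * F (u * a n)))
        ≤ (2 * (d:ℝ) / δ) * ((ρ/2) ^ K + CC * (2 * ρ * (ρ/2) ^ K)) := by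
          apply mul_le_mul_of_nonneg_left
            (add_le_add h1 (mul_le_mul_of_nonneg_left e2 hCCpos.le)) (by positivity)
      _ = D * (ρ/2) ^ K := by rw [hDdef]; ring
  -- conclusion
  have hr0 : (0:ℝ) ≤ ρ/2 := by linarith
  have hr1 : ρ/2 < 1 := by linarith
  rw [Metric.tendsto_nhdsWithin_nhds]
  intro ε hε
  obtain ⟨K0, hK0⟩ : ∃ K0 : ℕ, D * (ρ/2) ^ K0 < ε := by
    have h := (tendsto_pow_atTop_nhds_zero_of_lt_one hr0 hr1).const_mul D
    rw [mul_zero] at h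
    exact (h.eventually_lt_const hε).exists
  refine ⟨(2:ℝ)⁻¹ ^ K0, by positivity, ?_⟩
  intro u hu hdist
  rw [Real.dist_eq, sub_zero, abs_of_pos hu] at hdist
  have hex : ∃ K : ℕ, (2:ℝ)⁻¹ ^ (K+1) < u := by
    obtain ⟨m, hm⟩ := exists_pow_lt_of_lt_one hu (show (2:ℝ)⁻¹ < 1 by norm_num)
    exact ⟨m, lt_of_le_of_lt (pow_le_pow_of_le_one (by norm_num) (by norm_num)
      (Nat.le_succ m)) hm⟩
  set K := Nat.find hex with hKdef
  have hK1 : (2:ℝ)⁻¹ ^ (K+1) < u := Nat.find_spec hex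
  have hK2 : u ≤ (2:ℝ)⁻¹ ^ K := by
    rcases Nat.eq_zero_or_pos K with h0 | h0
    · rw [h0, pow_zero]
      exact le_of_lt (lt_of_lt_of_le hdist (pow_le_one₀ (by norm_num) (by norm_num)))
    · obtain ⟨s, hs⟩ := Nat.exists_eq_succ_of_ne_zero h0.ne'
      have := Nat.find_min hex (m := s) (by omega)
      push_neg at this
      rw [hs]
      simpa [Nat.succ_eq_add_one] using this
  have hKK0 : K0 ≤ K := by
    by_contra hcon
    push_neg at hcon
    have : (2:ℝ)⁻¹ ^ K0 ≤ (2:ℝ)⁻¹ ^ (K+1) :=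
      pow_le_pow_of_le_one (by norm_num) (by norm_num) (by omega)
    linarith
  rw [Real.dist_eq, sub_zero, abs_of_nonneg (hG0 u)]
  calc G u ≤ D * (ρ/2) ^ K := hGle K u hK1 hK2
    _ ≤ D * (ρ/2) ^ K0 := mul_le_mul_of_nonneg_left
        (pow_le_pow_of_le_one hr0 hr1.le hKK0) hD0
    _ < ε := hK0
end
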